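/- arXiv:math/0507039 — 11 statements merged into one kernel-verified Lean document; each statement's English description precedes it below -/
import Mathlib

section
/- Let A be an algebra and let R, S be reflexive compatible binary relations on A. Then [R,S|1] is a compatible relation on A, i.e., it is preserved by every operation of A. -/
open FirstOrder Language

universe u

/-- A binary relation on a structure `A` is compatible (admissible) if it is preserved
by every operation (function symbol) of the language. -/
def Compatible (L : Language) {A : Type u} [L.Structure A] (R : A → A → Prop) : Prop :=
  ∀ (n : ℕ) (f : L.Functions n) (a b : Fin n → A),
    (∀ i, R (a i) (b i)) → R (Structure.funMap f a) (Structure.funMap f b)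

/-- `(x, y; z, w) ∈ M(R, S)`: there is a term `t` and tuples `a R a'`, `b S b'` with
`x = t(a,b)`, `y = t(a,b')`, `z = t(a',b)`, `w = t(a',b')`. -/
def InM (L : Language) {A : Type u} [L.Structure A] (R S : A → A → Prop)
    (x y z w : A) : Prop :=
  ∃ (n m : ℕ) (t : L.Term (Fin n ⊕ Fin m)) (a a' : Fin n → A) (b b' : Fin m → A),
    (∀ i, R (a i) (a' i)) ∧ (∀ j, S (b j) (b' j)) ∧
      x = t.realize (Sum.elim a b) ∧ y = t.realize (Sum.elim a b') ∧
      z = t.realize (Sum.elim a' b) ∧ w = t.realize (Sum.elim a' b')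

/-- `[R, S | 1]`: the transitive closure of `{(z,w) : (x,x;z,w) ∈ M(R,S) for some x}`. -/
def comm1 (L : Language) {A : Type u} [L.Structure A] (R S : A → A → Prop) :
    A → A → Prop :=
  Relation.TransGen (fun z w => ∃ x, InM L R S x x z w)

/-- Relational composition. -/
def rcomp {A : Type u} (R S : A → A → Prop) : A → A → Prop :=
  fun a c => ∃ b, R a b ∧ S b c

/-- Converse of a relation. -/
def rconv {A : Type u} (R : A → A → Prop) : A → A → Prop := fun a b => R b a

/-- Intersection of relations. -/
def rinter {A : Type u} (R S : A → A → Prop) : A → A → Prop := fun a b => R a b ∧ S a b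

/-- A congruence: a compatible equivalence relation. -/
def IsCongruence (L : Language) {A : Type u} [L.Structure A] (θ : A → A → Prop) : Prop :=
  Equivalence θ ∧ Compatible L θ

/-- A tolerance: a reflexive symmetric compatible relation. -/
def IsTolerance (L : Language) {A : Type u} [L.Structure A] (T : A → A → Prop) : Prop :=
  Reflexive T ∧ Symmetric T ∧ Compatible L T

/-- `Cg R`: the smallest congruence containing `R` (intersection of all congruences ⊇ R). -/
def Cg (L : Language) {A : Type u} [L.Structure A] (R : A → A → Prop) : A → A → Prop :=
  fun a b => ∀ θ : A → A → Prop, IsCongruence L θ → (∀ x y, R x y → θ x y) → θ a b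

/-- `R°`: the smallest tolerance containing `R`. -/
def tolC (L : Language) {A : Type u} [L.Structure A] (R : A → A → Prop) : A → A → Prop :=
  fun a b => ∀ T : A → A → Prop, IsTolerance L T → (∀ x y, R x y → T x y) → T a b

/-- `K(R,S;V) = {(z,w) : ∃ x y, (x,y;z,w) ∈ M(R,S) ∧ x V y}`. -/
def Kop (L : Language) {A : Type u} [L.Structure A] (R S V : A → A → Prop) :
    A → A → Prop :=
  fun z w => ∃ x y, InM L R S x y z w ∧ V x y

/-- The join `γ ∨ D`: the smallest congruence containing both `γ` and `D`. -/
def cgJoin (L : Language) {A : Type u} [L.Structure A] (γ D : A → A → Prop) :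
    A → A → Prop :=
  fun a b => ∀ θ : A → A → Prop, IsCongruence L θ → (∀ x y, γ x y → θ x y) →
    (∀ x y, D x y → θ x y) → θ a b

variable {L : Language} {A : Type u} [L.Structure A]


private lemma transGen_compat {B : A → A → Prop} (hrefl : Reflexive B)
    (hc : Compatible L B) : Compatible L (Relation.TransGen B) := by
  intro n f a b hab
  have one : ∀ (j : Fin n) (u : Fin n → A) (x y : A), Relation.TransGen B x y →
      Relation.TransGen B (Structure.funMap f (Function.update u j x))
        (Structure.funMap f (Function.update u j y)) := by
    intro j u x y h
    induction h with
    | single h' =>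
        refine Relation.TransGen.single (hc n f _ _ (fun i => ?_))
        by_cases hi : i = j
        · subst hi; simpa using h'
        · simp only [Function.update_of_ne hi]; exact hrefl _
    | tail _ h2 ih =>
        refine ih.trans (Relation.TransGen.single (hc n f _ _ (fun i => ?_)))
        by_cases hi : i = j
        · subst hi; simpa using h2
        · simp only [Function.update_of_ne hi]; exact hrefl _
  have key : ∀ s : Finset (Fin n),
      Relation.TransGen B (Structure.funMap f a)
        (Structure.funMap f (fun i => if i ∈ s then b i else a i)) := by
    intro s
    induction s using Finset.induction with
    | empty =>
        simpa using Relation.TransGen.single (hc n f a a (fun i => hrefl _))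
    | @insert j s hj ih =>
        have h1 : (fun i => if i ∈ s then b i else a i)
            = Function.update (fun i => if i ∈ s then b i else a i) j (a j) := by
          funext i
          by_cases hi : i = j
          · subst hi; simp [hj]
          · simp [Function.update_of_ne hi]
        have h2 : (fun i => if i ∈ insert j s then b i else a i)
            = Function.update (fun i => if i ∈ s then b i else a i) j (b j) := by
          funext i
          by_cases hi : i = j
          · subst hi; simp
          · simp [Function.update_of_ne hi, Finset.mem_insert, hi]
        have step := one j (fun i => if i ∈ s then b i else a i) (a j) (b j) (hab j)
        rw [← h1] at step
        rw [h2]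
        exact ih.trans step
  have := key Finset.univ
  simpa using this

private lemma base_compat (R S : A → A → Prop) :
    Compatible L (fun z w => ∃ x, InM L R S x x z w) := by
  intro k f z w h
  choose x n m t a a' b b' hR hS hx hy hz hw using h
  set N := Fintype.card (Σ i : Fin k, Fin (n i)) with hN
  set M := Fintype.card (Σ i : Fin k, Fin (m i)) with hM
  set eN : (Σ i : Fin k, Fin (n i)) ≃ Fin N := Fintype.equivFin _ with heN
  set eM : (Σ i : Fin k, Fin (m i)) ≃ Fin M := Fintype.equivFin _ with heM
  set aa : Fin N → A := fun p => a (eN.symm p).1 (eN.symm p).2 with haa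
  set aa' : Fin N → A := fun p => a' (eN.symm p).1 (eN.symm p).2 with haa'
  set bb : Fin M → A := fun p => b (eM.symm p).1 (eM.symm p).2 with hbb
  set bb' : Fin M → A := fun p => b' (eM.symm p).1 (eM.symm p).2 with hbb'
  set emb : ∀ i : Fin k, Fin (n i) ⊕ Fin (m i) → Fin N ⊕ Fin M :=
    fun i => Sum.map (fun j => eN ⟨i, j⟩) (fun j => eM ⟨i, j⟩) with hemb
  set T : L.Term (Fin N ⊕ Fin M) :=
    Term.func f (fun i => (t i).relabel (emb i)) with hT
  have hcomp : ∀ (i : Fin k) (u : Fin N → A) (v : Fin M → A),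
      ((t i).relabel (emb i)).realize (Sum.elim u v)
        = (t i).realize (Sum.elim (fun j => u (eN ⟨i, j⟩)) (fun j => v (eM ⟨i, j⟩))) := by
    intro i u v
    rw [Term.realize_relabel]
    congr 1
    funext p
    cases p <;> rfl
  have hreal : ∀ (u : Fin N → A) (v : Fin M → A),
      T.realize (Sum.elim u v) = Structure.funMap f
        (fun i => (t i).realize (Sum.elim (fun j => u (eN ⟨i, j⟩)) (fun j => v (eM ⟨i, j⟩)))) := by
    intro u v
    simp only [hT, Term.realize, hcomp]
  have hsimpN : ∀ (c : ∀ i, Fin (n i) → A) (i : Fin k) (j : Fin (n i)),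
      (fun p => c (eN.symm p).1 (eN.symm p).2) (eN ⟨i, j⟩) = c i j := by
    intro c i j
    exact congrArg (fun q : (Σ i, Fin (n i)) => c q.1 q.2) (eN.symm_apply_apply ⟨i, j⟩)
  have hsimpM : ∀ (c : ∀ i, Fin (m i) → A) (i : Fin k) (j : Fin (m i)),
      (fun p => c (eM.symm p).1 (eM.symm p).2) (eM ⟨i, j⟩) = c i j := by
    intro c i j
    exact congrArg (fun q : (Σ i, Fin (m i)) => c q.1 q.2) (eM.symm_apply_apply ⟨i, j⟩)
  refine ⟨Structure.funMap f x, N, M, T, aa, aa', bb, bb', ?_, ?_, ?_, ?_, ?_, ?_⟩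
  · intro p
    exact hR (eN.symm p).1 (eN.symm p).2
  · intro p
    exact hS (eM.symm p).1 (eM.symm p).2
  · rw [hreal]
    congr 1
    funext i
    rw [hx i]
    congr 1
    funext p
    cases p with
    | inl j => exact (hsimpN a i j).symm
    | inr j => exact (hsimpM b i j).symm
  · rw [hreal]
    congr 1
    funext i
    rw [hy i]
    congr 1
    funext p
    cases p with
    | inl j => exact (hsimpN a i j).symm
    | inr j => exact (hsimpM b' i j).symm
  · rw [hreal]
    congr 1
    funext i
    rw [hz i]
    congr 1
    funext p
    cases p with
    | inl j => exact (hsimpN a' i j).symm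
    | inr j => exact (hsimpM b i j).symm
  · rw [hreal]
    congr 1
    funext i
    rw [hw i]
    congr 1
    funext p
    cases p with
    | inl j => exact (hsimpN a' i j).symm
    | inr j => exact (hsimpM b' i j).symm

private lemma base_refl (R S : A → A → Prop) (hRrefl : Reflexive R) :
    Reflexive (fun z w => ∃ x, InM L R S x x z w) := by
  intro z
  refine ⟨z, 1, 0, Term.var (Sum.inl 0), (fun _ => z), (fun _ => z),
    finZeroElim, finZeroElim, fun _ => hRrefl z, fun j => j.elim0, rfl, rfl, rfl, rfl⟩

theorem stmt1 (R S : A → A → Prop) (hRrefl : Reflexive R) (hSrefl : Reflexive S)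
    (hRc : Compatible L R) (hSc : Compatible L S) :
    Compatible L (comm1 L R S) :=
  transGen_compat (base_refl R S hRrefl) (base_compat R S)
end

section
/- Let A be an algebra and R, S reflexive compatible binary relations on A. Then [R,S|1] ⊆ (S ∩ (R⁻ ∘ R))*, where R⁻ is the converse of R, ∘ is relational composition, and * is transitive closure. -/
open FirstOrder Language

universe u

variable {L : Language} {A : Type u} [L.Structure A]

private lemma termCompat {R : A → A → Prop} (hRc : Compatible L R) {α : Type*}
    (t : L.Term α) (u v : α → A) (h : ∀ i, R (u i) (v i)) :
    R (t.realize u) (t.realize v) := by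
  induction t with
  | var i => exact h i
  | func f ts ih =>
    simp only [Term.realize]
    exact hRc _ f _ _ fun i => ih i

theorem stmt5 (R S : A → A → Prop) (hRrefl : Reflexive R) (hSrefl : Reflexive S)
    (hRc : Compatible L R) (hSc : Compatible L S) :
    ∀ a b, comm1 L R S a b →
      Relation.TransGen (rinter S (rcomp (rconv R) R)) a b := by
  have base : ∀ z w, (∃ x, InM L R S x x z w) → rinter S (rcomp (rconv R) R) z w := by
    rintro z w ⟨x, n, m, t, a, a', b, b', hR, hS, hx1, hx2, hz, hw⟩
    constructor
    · subst hz hw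
      exact termCompat hSc t _ _ (by rintro (i|j); exacts [hSrefl _, hS j])
    · refine ⟨x, ?_, ?_⟩
      · show R x z
        rw [hx1, hz]
        exact termCompat hRc t _ _ (by rintro (i|j); exacts [hR i, hRrefl _])
      · rw [hx2, hw]
        exact termCompat hRc t _ _ (by rintro (i|j); exacts [hR i, hRrefl _])
  intro a b h
  induction h with
  | single hzw => exact .single (base _ _ hzw)
  | tail _ hzw ih => exact ih.tail (base _ _ hzw)
end

section
/- Let A be an algebra, R a reflexive compatible binary relation on A, and S a tolerance of A (a reflexive symmetric compatible relation). Then [R,S|1] is a congruence of A, i.e., a compatible equivalence relation. -/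
open FirstOrder Language

universe u

variable {L : Language} {A : Type u} [L.Structure A]

lemma InM_diag (R S : A → A → Prop) (hR : Reflexive R) (x : A) : InM L R S x x x x :=
  ⟨1, 0, Term.var (Sum.inl 0), fun _ => x, fun _ => x, Fin.elim0, Fin.elim0,
    fun _ => hR x, fun j => j.elim0, rfl, rfl, rfl, rfl⟩

lemma InM_comp (R S : A → A → Prop) {k : ℕ} (s : L.Term (Fin k))
    (x y z w : Fin k → A) (h : ∀ i, InM L R S (x i) (y i) (z i) (w i)) :
    InM L R S (s.realize x) (s.realize y) (s.realize z) (s.realize w) := by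
  choose n m t a a' b b' ha hb hx hy hz hw using h
  let e₁ := Fintype.equivFin (Σ i, Fin (n i))
  let e₂ := Fintype.equivFin (Σ i, Fin (m i))
  refine ⟨_, _,
    s.subst (fun i => (t i).relabel (Sum.map (fun j => e₁ ⟨i, j⟩) (fun j => e₂ ⟨i, j⟩))),
    fun p => a (e₁.symm p).1 (e₁.symm p).2, fun p => a' (e₁.symm p).1 (e₁.symm p).2,
    fun q => b (e₂.symm q).1 (e₂.symm q).2, fun q => b' (e₂.symm q).1 (e₂.symm q).2,
    fun p => ha _ _, fun q => hb _ _, ?_, ?_, ?_, ?_⟩ <;>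
  · rw [Term.realize_subst]
    congr 1
    funext i
    first
      | rw [hx i] | rw [hy i] | rw [hz i] | rw [hw i]
    rw [Term.realize_relabel]
    congr 1
    funext v
    rcases v with j | j <;> simp only [Function.comp_apply, Sum.map_inl, Sum.map_inr, Sum.elim_inl, Sum.elim_inr] <;> rw [Equiv.symm_apply_apply]

section Main
variable (R S : A → A → Prop)

local notation "D" => (fun z w => ∃ x, InM L R S x x z w)

lemma D_slot (hR : Reflexive R) {k : ℕ} (f : L.Functions k) (u : Fin k → A)
    (i : Fin k) {c d : A} (h : ∃ x, InM L R S x x c d) :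
    ∃ x, InM L R S x x (Structure.funMap f (Function.update u i c))
      (Structure.funMap f (Function.update u i d)) := by
  obtain ⟨x, hx⟩ := h
  refine ⟨Structure.funMap f (Function.update u i x), ?_⟩
  have := InM_comp R S (Term.func f (fun j => Term.var j))
    (Function.update u i x) (Function.update u i x)
    (Function.update u i c) (Function.update u i d) ?_
  · simpa [Term.realize] using this
  · intro j
    rcases eq_or_ne j i with rfl | hne
    · simpa using hx
    · simp [Function.update_of_ne hne]
      exact InM_diag R S hR (u j)

lemma θ_slot (hR : Reflexive R) {k : ℕ} (f : L.Functions k) (u : Fin k → A)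
    (i : Fin k) {c d : A} (h : Relation.TransGen (fun z w => ∃ x, InM L R S x x z w) c d) :
    Relation.TransGen (fun z w => ∃ x, InM L R S x x z w)
      (Structure.funMap f (Function.update u i c))
      (Structure.funMap f (Function.update u i d)) := by
  induction h with
  | single h => exact Relation.TransGen.single (D_slot R S hR f u i h)
  | tail _ h ih => exact ih.tail (D_slot R S hR f u i h)

end Main

theorem stmt6 (R S : A → A → Prop) (hRrefl : Reflexive R) (hRc : Compatible L R)
    (hS : IsTolerance L S) :
    IsCongruence L (comm1 L R S) := by
  obtain ⟨hSrefl, hSsymm, hSc⟩ := hS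
  have hDsymm : ∀ z w : A, (∃ x, InM L R S x x z w) → ∃ x, InM L R S x x w z := by
    rintro z w ⟨x, n, m, t, a, a', b, b', ha, hb, hx, hy, hz, hw⟩
    exact ⟨x, n, m, t, a, a', b', b, ha, fun j => hSsymm (hb j), hy, hx, hw, hz⟩
  have hrefl : ∀ x : A, comm1 L R S x x :=
    fun x => Relation.TransGen.single ⟨x, InM_diag R S hRrefl x⟩
  constructor
  · refine ⟨hrefl, ?_, fun h1 h2 => h1.trans h2⟩
    intro p q h
    induction h with
    | single h => exact Relation.TransGen.single (hDsymm _ _ h)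
    | tail _ h ih => exact (Relation.TransGen.single (hDsymm _ _ h)).trans ih
  · intro k f a b hab
    have key : ∀ l : ℕ, l ≤ k → comm1 L R S (Structure.funMap f a)
        (Structure.funMap f (fun j => if (j : ℕ) < l then b j else a j)) := by
      intro l
      induction l with
      | zero =>
        intro _
        have : (fun j : Fin k => if (j : ℕ) < 0 then b j else a j) = a :=
          funext fun j => by simp
        rw [this]; exact hrefl _
      | succ l ih =>
        intro hl
        have hlk : l < k := hl
        have h1 : (fun j : Fin k => if (j : ℕ) < l then b j else a j)
            = Function.update (fun j : Fin k => if (j : ℕ) < l then b j else a j)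
              ⟨l, hlk⟩ (a ⟨l, hlk⟩) := by
          funext j
          rcases eq_or_ne j ⟨l, hlk⟩ with rfl | hne
          · simp
          · rw [Function.update_of_ne hne]
        have h2 : (fun j : Fin k => if (j : ℕ) < l + 1 then b j else a j)
            = Function.update (fun j : Fin k => if (j : ℕ) < l then b j else a j)
              ⟨l, hlk⟩ (b ⟨l, hlk⟩) := by
          funext j
          rcases eq_or_ne j ⟨l, hlk⟩ with rfl | hne
          · simp
          · rw [Function.update_of_ne hne]
            have hjl : (j : ℕ) ≠ l := fun h => hne (Fin.ext h)
            have : (j : ℕ) < l + 1 ↔ (j : ℕ) < l := by omega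
            simp [this]
        have step : comm1 L R S
            (Structure.funMap f (fun j : Fin k => if (j : ℕ) < l then b j else a j))
            (Structure.funMap f (fun j : Fin k => if (j : ℕ) < l + 1 then b j else a j)) := by
          have step0 := θ_slot R S hRrefl f
            (fun j : Fin k => if (j : ℕ) < l then b j else a j) ⟨l, hlk⟩ (hab ⟨l, hlk⟩)
          rwa [← h1, ← h2] at step0
        exact (ih (Nat.le_of_succ_le hl)).trans step
    have := key k le_rfl
    have hb : (fun j : Fin k => if (j : ℕ) < k then b j else a j) = b :=
      funext fun j => by simp [j.is_lt]
    rwa [hb] at this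
end

section
/- Let A be an algebra and R₁, R₂, S reflexive compatible binary relations on A. Then [R₁∘R₂, S|1] ⊆ (S ∩ (R₂⁻ ∘ (S ∩ (R₁⁻ ∘ R₁)) ∘ R₂))*. -/
open FirstOrder Language

universe u

variable {L : Language} {A : Type u} [L.Structure A]


lemma term_compat {R : A → A → Prop} (hc : Compatible L R) {α : Type*}
    (t : L.Term α) (v v' : α → A) (h : ∀ i, R (v i) (v' i)) :
    R (t.realize v) (t.realize v') := by
  induction t with
  | var i => exact h i
  | func f ts ih =>
    simp only [Term.realize]
    exact hc _ f _ _ ih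

theorem stmt7 (R₁ R₂ S : A → A → Prop)
    (hR₁refl : Reflexive R₁) (hR₂refl : Reflexive R₂) (hSrefl : Reflexive S)
    (hR₁c : Compatible L R₁) (hR₂c : Compatible L R₂) (hSc : Compatible L S) :
    ∀ a b, comm1 L (rcomp R₁ R₂) S a b →
      Relation.TransGen
        (rinter S (rcomp (rconv R₂) (rcomp (rinter S (rcomp (rconv R₁) R₁)) R₂))) a b := by
  intro z w h
  refine Relation.TransGen.mono ?_ z w h
  rintro z w ⟨x, n, m, t, a, a', b, b', ha, hb, hx1, hx2, hz, hw⟩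
  choose c hac hca' using ha
  subst hz hw
  refine ⟨term_compat hSc t _ _ ?_, t.realize (Sum.elim c b), ?_,
    t.realize (Sum.elim c b'), ⟨term_compat hSc t _ _ ?_, t.realize (Sum.elim a b), ?_, ?_⟩, ?_⟩
  · rintro (i|j); exacts [hSrefl _, hb j]
  · exact term_compat hR₂c t _ _ (by rintro (i|j); exacts [hca' i, hR₂refl _])
  · rintro (i|j); exacts [hSrefl _, hb j]
  · exact term_compat hR₁c t _ _ (by rintro (i|j); exacts [hac i, hR₁refl _])
  · rw [hx1.symm.trans hx2]
    exact term_compat hR₁c t _ _ (by rintro (i|j); exacts [hac i, hR₁refl _])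
  · exact term_compat hR₂c t _ _ (by rintro (i|j); exacts [hca' i, hR₂refl _])
end

section
/- Let A be an algebra and R, S, T reflexive compatible binary relations on A. Then [R, S∘T|1] ⊆ ((R⁻∘R) ∩ ((S ∩ (R⁻ ∘ (S ∩ T⁻) ∘ R)) ∘ (T ∩ (R⁻ ∘ (S⁻ ∩ T) ∘ R))))*. -/
open FirstOrder Language

universe u

variable {L : Language} {A : Type u} [L.Structure A]


lemma compat_term {L : Language} {A : Type u} [L.Structure A] {R : A → A → Prop}
    (hR : Compatible L R) {α : Type*} (t : L.Term α) (v w : α → A)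
    (h : ∀ i, R (v i) (w i)) : R (t.realize v) (t.realize w) := by
  induction t with
  | var i => exact h i
  | func f ts ih => exact hR _ f _ _ (fun i => ih i)

theorem stmt8 (R S T : A → A → Prop)
    (hRrefl : Reflexive R) (hSrefl : Reflexive S) (hTrefl : Reflexive T)
    (hRc : Compatible L R) (hSc : Compatible L S) (hTc : Compatible L T) :
    ∀ a b, comm1 L R (rcomp S T) a b →
      Relation.TransGen
        (rinter (rcomp (rconv R) R)
          (rcomp (rinter S (rcomp (rconv R) (rcomp (rinter S (rconv T)) R)))
                 (rinter T (rcomp (rconv R) (rcomp (rinter (rconv S) T) R))))) a b := by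
  intro a b h
  refine Relation.TransGen.mono ?_ _ _ h
  rintro z w ⟨x, n, m, t, a, a', b, b', hR, hST, hx1, hx2, hz, hw⟩
  choose c hSc' hTc' using hST
  subst hz hw
  have hRtb : ∀ (d : Fin m → A), R (t.realize (Sum.elim a d)) (t.realize (Sum.elim a' d)) := by
    intro d
    exact compat_term hRc t _ _ (by rintro (i|j) <;> simp [hR, hRrefl _])
  constructor
  · exact ⟨t.realize (Sum.elim a b), hRtb b,
      by rw [hx1.symm.trans hx2]; exact hRtb b'⟩
  · refine ⟨t.realize (Sum.elim a' c), ⟨?_, ?_⟩, ?_, ?_⟩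
    · exact compat_term hSc t _ _ (by rintro (i|j) <;> simp [hSrefl _, hSc'])
    · refine ⟨t.realize (Sum.elim a b), hRtb b,
        t.realize (Sum.elim a c), ⟨?_, ?_⟩, hRtb c⟩
      · exact compat_term hSc t _ _ (by rintro (i|j) <;> simp [hSrefl _, hSc'])
      · show T _ _
        rw [hx1.symm.trans hx2]
        exact compat_term hTc t _ _ (by rintro (i|j) <;> simp [hTrefl _, hTc'])
    · exact compat_term hTc t _ _ (by rintro (i|j) <;> simp [hTrefl _, hTc'])
    · refine ⟨t.realize (Sum.elim a c), hRtb c,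
        t.realize (Sum.elim a b'), ⟨?_, ?_⟩, hRtb b'⟩
      · show S _ _
        rw [hx2.symm.trans hx1]
        exact compat_term hSc t _ _ (by rintro (i|j) <;> simp [hSrefl _, hSc'])
      · exact compat_term hTc t _ _ (by rintro (i|j) <;> simp [hTrefl _, hTc'])
end

section
/- Let A be an algebra and R, S, T, U reflexive compatible binary relations on A. Then [R, S∘T∘U|1] ⊆ ((R⁻∘R) ∩ (S ∘ (T ∩ (R⁻ ∘ (T ∩ (S⁻∘U⁻)) ∘ R)) ∘ U))*. -/
open FirstOrder Language

universe u

variable {L : Language} {A : Type u} [L.Structure A]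

lemma compat_realize {R : A → A → Prop} (hRc : Compatible L R) {α : Type*}
    (t : L.Term α) (u u' : α → A) (h : ∀ i, R (u i) (u' i)) :
    R (t.realize u) (t.realize u') := by
  induction t with
  | var i => exact h i
  | func f ts ih =>
      simp only [Term.realize]
      exact hRc _ f _ _ fun i => ih i

theorem stmt9 (R S T U : A → A → Prop)
    (hRrefl : Reflexive R) (hSrefl : Reflexive S) (hTrefl : Reflexive T) (hUrefl : Reflexive U)
    (hRc : Compatible L R) (hSc : Compatible L S) (hTc : Compatible L T) (hUc : Compatible L U) :
    ∀ a b, comm1 L R (rcomp S (rcomp T U)) a b →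
      Relation.TransGen
        (rinter (rcomp (rconv R) R)
          (rcomp S
            (rcomp (rinter T (rcomp (rconv R)
                     (rcomp (rinter T (rcomp (rconv S) (rconv U))) R)))
              U))) a b := by
  intro a b hab
  refine Relation.TransGen.mono ?_ a b hab
  rintro z w ⟨x, n, m, t, a0, a', b0, b', ha, hb, hx1, hx2, hz, hw⟩
  choose c hSc' d hTd hUd using fun j => hb j
  refine ⟨⟨x, ?_, ?_⟩, t.realize (Sum.elim a' c), ?_,
    t.realize (Sum.elim a' d), ⟨?_, t.realize (Sum.elim a0 c), ?_,
      t.realize (Sum.elim a0 d), ⟨?_, x, ?_, ?_⟩, ?_⟩, ?_⟩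
  · rw [hx1, hz]
    exact compat_realize hRc t _ _ (by rintro (i | j) <;> [exact ha i; exact hRrefl _])
  · rw [hx2, hw]
    exact compat_realize hRc t _ _ (by rintro (i | j) <;> [exact ha i; exact hRrefl _])
  · rw [hz]
    exact compat_realize hSc t _ _ (by rintro (i | j) <;> [exact hSrefl _; exact hSc' j])
  · exact compat_realize hTc t _ _ (by rintro (i | j) <;> [exact hTrefl _; exact hTd j])
  · exact compat_realize hRc t _ _ (by rintro (i | j) <;> [exact ha i; exact hRrefl _])
  · exact compat_realize hTc t _ _ (by rintro (i | j) <;> [exact hTrefl _; exact hTd j])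
  · rw [hx1]
    exact compat_realize hSc t _ _ (by rintro (i | j) <;> [exact hSrefl _; exact hSc' j])
  · rw [hx2]
    exact compat_realize hUc t _ _ (by rintro (i | j) <;> [exact hUrefl _; exact hUd j])
  · exact compat_realize hRc t _ _ (by rintro (i | j) <;> [exact ha i; exact hRrefl _])
  · rw [hw]
    exact compat_realize hUc t _ _ (by rintro (i | j) <;> [exact hUrefl _; exact hUd j])
end

section
/- Let A be an algebra. If A satisfies the condition that (R₁∘R₂) ∩ T ⊆ (T ∩ (R₂⁻ ∘ (T ∩ (R₁⁻∘R₁)) ∘ R₂))* for every tolerance T and all reflexive compatible relations R₁, R₂, then A satisfies: for every tolerance T and all reflexive compatible relations R₁, R₂, R₁ ∩ (T ∘ R₂) ⊆ (T ∩ (R₂ ∘ (T ∩ (R₁⁻∘R₁)) ∘ R₂⁻))* ∘ R₂. -/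
open FirstOrder Language

universe u

variable {L : Language} {A : Type u} [L.Structure A]

theorem stmt13
    (h : ∀ T : A → A → Prop, IsTolerance L T →
      ∀ R₁ R₂ : A → A → Prop, Reflexive R₁ → Compatible L R₁ →
        Reflexive R₂ → Compatible L R₂ →
        ∀ a b, rcomp R₁ R₂ a b ∧ T a b →
          Relation.TransGen
            (rinter T (rcomp (rconv R₂) (rcomp (rinter T (rcomp (rconv R₁) R₁)) R₂))) a b) :
    ∀ T : A → A → Prop, IsTolerance L T →
      ∀ R₁ R₂ : A → A → Prop, Reflexive R₁ → Compatible L R₁ →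
        Reflexive R₂ → Compatible L R₂ →
        ∀ a b, R₁ a b ∧ rcomp T R₂ a b →
          rcomp
            (Relation.TransGen
              (rinter T (rcomp R₂ (rcomp (rinter T (rcomp (rconv R₁) R₁)) (rconv R₂)))))
            R₂ a b := by
  intro T hT R₁ R₂ hR₁r hR₁c hR₂r hR₂c a b ⟨hab, c, hTac, hcb⟩
  refine ⟨c, ?_, hcb⟩
  exact h T hT R₁ (rconv R₂) hR₁r hR₁c (fun x => hR₂r x)
    (fun n f x y hi => hR₂c n f y x fun i => hi i) a c ⟨⟨b, hab, hcb⟩, hTac⟩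
end

section
/- Let A be an algebra. If A satisfies β ∩ (T∘S) ⊆ (T ∩ (S ∘ (T∩β) ∘ S))* ∘ S for every congruence β and all tolerances T, S, then A satisfies β ∩ (T∘γ) ⊆ γ ∨ (T∩β)* for all congruences β, γ and every tolerance T, where γ ∨ D denotes the smallest congruence containing both γ and D. -/
open FirstOrder Language

universe u

variable {L : Language} {A : Type u} [L.Structure A]

theorem stmt14
    (h : ∀ β : A → A → Prop, IsCongruence L β →
      ∀ T S : A → A → Prop, IsTolerance L T → IsTolerance L S →
        ∀ a b, β a b ∧ rcomp T S a b →
          rcomp (Relation.TransGen (rinter T (rcomp S (rcomp (rinter T β) S)))) S a b) :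
    ∀ β γ : A → A → Prop, IsCongruence L β → IsCongruence L γ →
      ∀ T : A → A → Prop, IsTolerance L T →
        ∀ a b, β a b ∧ rcomp T γ a b →
          cgJoin L γ (Relation.TransGen (rinter T β)) a b := by
  intro β γ hβ hγ T hT a b hab
  have hγtol : IsTolerance L γ :=
    ⟨hγ.1.refl, fun _ _ => hγ.1.symm, hγ.2⟩
  obtain ⟨c, htc, hγc⟩ := h β hβ T γ hT hγtol a b hab
  intro θ hθ hγθ hDθ
  have key : ∀ x y, Relation.TransGen (rinter T (rcomp γ (rcomp (rinter T β) γ))) x y →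
      θ x y := by
    intro x y hxy
    induction hxy with
    | single hs =>
        obtain ⟨-, u, hγu, v, htβ, hγv⟩ := hs
        exact hθ.1.trans (hγθ _ _ hγu)
          (hθ.1.trans (hDθ _ _ (Relation.TransGen.single htβ)) (hγθ _ _ hγv))
    | tail hs hstep ih =>
        obtain ⟨-, u, hγu, v, htβ, hγv⟩ := hstep
        exact hθ.1.trans ih (hθ.1.trans (hγθ _ _ hγu)
          (hθ.1.trans (hDθ _ _ (Relation.TransGen.single htβ)) (hγθ _ _ hγv)))
  exact hθ.1.trans (key _ _ htc) (hγθ _ _ hγc)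
end

section
/- Let A be an algebra. If R ⊆ [R,R|1] holds for every reflexive compatible relation R on A, then for all reflexive compatible relations R, S, T on A: R ∩ (S∘T) ⊆ ((S ∩ (R⁻ ∘ (S∩T⁻) ∘ R)) ∘ (T ∩ (R⁻ ∘ (S⁻∩T) ∘ R)))*. -/
open FirstOrder Language

universe u

variable {L : Language} {A : Type u} [L.Structure A]

theorem term_pres {L : Language} {A : Type u} [L.Structure A]
    {P : A → A → Prop} (hP : Compatible L P) {n m : ℕ} (t : L.Term (Fin n ⊕ Fin m))
    (e e' : Fin n → A) (d d' : Fin m → A)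
    (he : ∀ i, P (e i) (e' i)) (hd : ∀ j, P (d j) (d' j)) :
    P (t.realize (Sum.elim e d)) (t.realize (Sum.elim e' d')) := by
  induction t with
  | var v => cases v with
    | inl i => exact he i
    | inr j => exact hd j
  | func f ts ih =>
    simp only [Term.realize]
    exact hP _ f _ _ fun i => ih i

theorem stmt15
    (h : ∀ R : A → A → Prop, Reflexive R → Compatible L R →
      ∀ a b, R a b → comm1 L R R a b) :
    ∀ R S T : A → A → Prop,
      Reflexive R → Compatible L R → Reflexive S → Compatible L S →
      Reflexive T → Compatible L T →
      ∀ a b, R a b ∧ rcomp S T a b →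
        Relation.TransGen
          (rcomp (rinter S (rcomp (rconv R) (rcomp (rinter S (rconv T)) R)))
                 (rinter T (rcomp (rconv R) (rcomp (rinter (rconv S) T) R)))) a b := by
  intro R S T hRr hRc hSr hSc hTr hTc a b hab
  set W : A → A → Prop := rinter R (rcomp S T) with hW
  have hWr : Reflexive W := fun x => ⟨hRr x, x, hSr x, hTr x⟩
  have hWc : Compatible L W := by
    intro n f u v huv
    refine ⟨hRc n f u v (fun i => (huv i).1), ?_⟩
    choose c hc1 hc2 using fun i => (huv i).2
    exact ⟨Structure.funMap f c, hSc n f u c hc1, hTc n f c v hc2⟩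
  have hWR : ∀ x y, W x y → R x y := fun x y hxy => hxy.1
  have key := h W hWr hWc a b hab
  refine Relation.TransGen.mono ?_ a b key
  rintro z w ⟨x, n, m, t, p, p', q, q', hpW, hqW, hx1, hx2, hz, hw⟩
  -- choose middle tuple c with q S c T q'
  choose c hc1 hc2 using fun j => (hqW j).2
  set u : A := t.realize (Sum.elim p' c) with hu
  have hpR : ∀ i, R (p i) (p' i) := fun i => (hpW i).1
  refine ⟨u, ⟨?_, ?_⟩, ?_, ?_⟩
  · -- z S u
    rw [hz, hu]
    exact term_pres hSc t p' p' q c (fun i => hSr _) hc1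
  · -- z (R⁻ ∘ (S∩T⁻) ∘ R) u
    refine ⟨x, ?_, t.realize (Sum.elim p c), ⟨?_, ?_⟩, ?_⟩
    · show R x z
      rw [hx1, hz]
      exact term_pres hRc t p p' q q (fun i => hpR i) (fun j => hRr _)
    · show S x _
      rw [hx1]
      exact term_pres hSc t p p q c (fun i => hSr _) hc1
    · show T _ x
      rw [hx2]
      exact term_pres hTc t p p c q' (fun i => hTr _) hc2
    · show R _ u
      rw [hu]
      exact term_pres hRc t p p' c c (fun i => hpR i) (fun j => hRr _)
  · -- u T w
    rw [hw, hu]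
    exact term_pres hTc t p' p' c q' (fun i => hTr _) hc2
  · -- u (R⁻ ∘ (S⁻∩T) ∘ R) w
    refine ⟨t.realize (Sum.elim p c), ?_, x, ⟨?_, ?_⟩, ?_⟩
    · show R _ u
      rw [hu]
      exact term_pres hRc t p p' c c (fun i => hpR i) (fun j => hRr _)
    · show S x _
      rw [hx1]
      exact term_pres hSc t p p q c (fun i => hSr _) hc1
    · show T _ x
      rw [hx2]
      exact term_pres hTc t p p c q' (fun i => hTr _) hc2
    · show R x w
      rw [hx2, hw]
      exact term_pres hRc t p p' q' q' (fun i => hpR i) (fun j => hRr _)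
end

section
/- Let A be an algebra. The following are equivalent: (i) for every reflexive compatible relation R, both R ⊆ [R,R|1] and R⁻ ⊆ [R,R|1]; (ii) for every reflexive compatible relation R, Cg(R) = [R,R|1], where Cg(R) is the smallest congruence containing R. -/
open FirstOrder Language

universe u

variable {L : Language} {A : Type u} [L.Structure A]

/-- Term operations preserve compatible relations. -/
lemma realize_mono {C : A → A → Prop} (hC : Compatible L C) {α : Type*}
    (t : L.Term α) (v v' : α → A) (h : ∀ i, C (v i) (v' i)) :
    C (t.realize v) (t.realize v') := by
  induction t with
  | var i => exact h i
  | func f ts ih =>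
      simp only [Term.realize]
      exact hC _ f _ _ fun i => ih i

/-- Membership in `M(R,S)` witnessed by a term over arbitrary finite index types. -/
lemma inM_of {R S : A → A → Prop} {x y z w : A} {α β : Type} [Fintype α] [Fintype β]
    (t : L.Term (α ⊕ β)) (a a' : α → A) (b b' : β → A)
    (ha : ∀ i, R (a i) (a' i)) (hb : ∀ j, S (b j) (b' j))
    (hx : x = t.realize (Sum.elim a b)) (hy : y = t.realize (Sum.elim a b'))
    (hz : z = t.realize (Sum.elim a' b)) (hw : w = t.realize (Sum.elim a' b')) :
    InM L R S x y z w := by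
  classical
  let e1 := Fintype.equivFin α
  let e2 := Fintype.equivFin β
  have key : ∀ (u : α → A) (v : β → A),
      (t.relabel (Sum.map e1 e2)).realize (Sum.elim (u ∘ e1.symm) (v ∘ e2.symm)) =
        t.realize (Sum.elim u v) := by
    intro u v
    rw [Term.realize_relabel]
    congr 1
    funext i
    cases i <;> simp
  exact ⟨_, _, t.relabel (Sum.map e1 e2), a ∘ e1.symm, a' ∘ e1.symm, b ∘ e2.symm, b' ∘ e2.symm,
    fun i => ha _, fun j => hb _,
    by rw [key]; exact hx, by rw [key]; exact hy, by rw [key]; exact hz, by rw [key]; exact hw⟩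

/-- The generator relation of `comm1` is reflexive when `R` is. -/
lemma gen_refl {R : A → A → Prop} (hR : Reflexive R) (c : A) :
    ∃ x, InM L R R x x c c := by
  refine ⟨c, 1, 0, Term.var (Sum.inl 0), (fun _ => c), (fun _ => c),
    finZeroElim, finZeroElim, fun _ => hR c, fun j => j.elim0, ?_, ?_, ?_, ?_⟩ <;> rfl

/-- The generator relation of `comm1` is compatible. -/
lemma gen_compatible {R : A → A → Prop} :
    Compatible L (fun z w => ∃ x, InM L R R x x z w) := by
  intro k f zs ws h
  choose xs hxs using h
  choose n m t a a' b b' ha hb hx hy hz hw using hxs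
  refine ⟨Structure.funMap f xs, ?_⟩
  have comp : ∀ (i : Fin k) (u : ∀ i, Fin (n i) → A) (v : ∀ i, Fin (m i) → A),
      (Sum.elim (fun p : Σ i, Fin (n i) => u p.1 p.2) (fun p : Σ i, Fin (m i) => v p.1 p.2)) ∘
        (Sum.map (fun j => (⟨i, j⟩ : Σ i, Fin (n i))) (fun j => (⟨i, j⟩ : Σ i, Fin (m i)))) =
        Sum.elim (u i) (v i) := by
    intro i u v
    funext x
    cases x <;> rfl
  refine inM_of (α := Σ i, Fin (n i)) (β := Σ i, Fin (m i))
    (Term.func f (fun i => (t i).relabel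
      (Sum.map (fun j => (⟨i, j⟩ : Σ i, Fin (n i))) (fun j => (⟨i, j⟩ : Σ i, Fin (m i))))))
    (fun p => a p.1 p.2) (fun p => a' p.1 p.2) (fun p => b p.1 p.2) (fun p => b' p.1 p.2)
    (fun p => ha p.1 p.2) (fun p => hb p.1 p.2) ?_ ?_ ?_ ?_ <;>
  · simp only [Term.realize]
    congr 1
    funext i
    rw [Term.realize_relabel, comp]
    first
      | exact hx i | exact hy i | exact hz i | exact hw i

/-- The transitive closure of a reflexive compatible relation is compatible. -/
lemma transGen_compatible {G : A → A → Prop} (hrefl : Reflexive G) (hc : Compatible L G) :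
    Compatible L (Relation.TransGen G) := by
  intro k f zs ws h
  have step : ∀ (i : Fin k) (v : Fin k → A) {z w : A}, G z w →
      G (Structure.funMap f (Function.update v i z)) (Structure.funMap f (Function.update v i w)) := by
    intro i v z w hzw
    refine hc _ f _ _ fun j => ?_
    rcases eq_or_ne j i with rfl | hne
    · simpa using hzw
    · rw [Function.update_of_ne hne, Function.update_of_ne hne]
      exact hrefl _
  have single : ∀ (i : Fin k) (v : Fin k → A) {z w : A}, Relation.TransGen G z w →
      Relation.TransGen G (Structure.funMap f (Function.update v i z))
        (Structure.funMap f (Function.update v i w)) := by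
    intro i v z w hzw
    induction hzw with
    | single h1 => exact Relation.TransGen.single (step i v h1)
    | tail _ h2 ih => exact ih.tail (step i v h2)
  have key : ∀ k' : ℕ, k' ≤ k → Relation.TransGen G (Structure.funMap f zs)
      (Structure.funMap f (fun i => if (i : ℕ) < k' then ws i else zs i)) := by
    intro k' hk'
    induction k' with
    | zero =>
        have e : (fun i : Fin k => if (i : ℕ) < 0 then ws i else zs i) = zs := by
          funext i; simp
        rw [e]
        exact Relation.TransGen.single (hrefl _)
    | succ k' ih =>
        have hk : k' < k := hk'
        set i0 : Fin k := ⟨k', hk⟩ with hi0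
        have h1 : (fun i : Fin k => if (i : ℕ) < k' then ws i else zs i) =
            Function.update (fun i : Fin k => if (i : ℕ) < k' + 1 then ws i else zs i)
              i0 (zs i0) := by
          funext i
          rcases eq_or_ne i i0 with rfl | hne
          · simp [Function.update_self, hi0]
          · rw [Function.update_of_ne hne]
            have hiv : (i : ℕ) ≠ k' := fun hcon => hne (Fin.ext hcon)
            by_cases h2 : (i : ℕ) < k'
            · simp [h2, Nat.lt_succ_of_lt h2]
            · have h3 : ¬ (i : ℕ) < k' + 1 := by omega
              simp [h2, h3]
        have h2 : (fun i : Fin k => if (i : ℕ) < k' + 1 then ws i else zs i) =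
            Function.update (fun i : Fin k => if (i : ℕ) < k' + 1 then ws i else zs i)
              i0 (ws i0) := by
          funext i
          rcases eq_or_ne i i0 with rfl | hne
          · simp [hi0]
          · rw [Function.update_of_ne hne]
        refine (ih (Nat.le_of_succ_le hk')).trans ?_
        rw [h1]
        conv_rhs => rw [h2]
        exact single i0 _ (h i0)
  have e : (fun i : Fin k => if (i : ℕ) < k then ws i else zs i) = ws := by
    funext i; simp [i.isLt]
  have := key k le_rfl
  rwa [e] at this

lemma comm1_refl {R : A → A → Prop} (hR : Reflexive R) :
    Reflexive (comm1 L R R) :=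
  fun c => Relation.TransGen.single (gen_refl hR c)

lemma comm1_compatible {R : A → A → Prop} (hR : Reflexive R) :
    Compatible L (comm1 L R R) :=
  transGen_compatible (fun c => gen_refl hR c) gen_compatible

/-- `[R,R|1] ⊆ Cg(R)`. -/
lemma comm1_le_cg {R : A → A → Prop} {a b : A} (h : comm1 L R R a b) :
    Cg L R a b := by
  intro θ hθ hsub
  have gen : ∀ {z w : A}, (∃ x, InM L R R x x z w) → θ z w := by
    rintro z w ⟨x, n, m, t, a, a', b, b', ha, hb, hx, hy, hz, hw⟩
    rw [hz, hw]
    refine realize_mono hθ.2 t _ _ fun i => ?_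
    cases i with
    | inl i => exact hθ.1.refl _
    | inr j => exact hsub _ _ (hb j)
  induction h with
  | single h1 => exact gen h1
  | tail _ h2 ih => exact hθ.1.trans ih (gen h2)

/-- Under condition (i), `[R,R|1]` is symmetric. -/
lemma comm1_symm {R : A → A → Prop} (hR : Reflexive R)
    (hsub : ∀ a b, R a b → comm1 L R R a b)
    (hconv : ∀ a b, R b a → comm1 L R R a b)
    {a b : A} (h : comm1 L R R a b) : comm1 L R R b a := by
  have gen : ∀ {z w : A}, (∃ x, InM L R R x x z w) → comm1 L R R w z := by
    rintro z w ⟨x, n, m, t, aa, aa', bb, bb', ha, hb, hx, hy, hz, hw⟩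
    have h1 : comm1 L R R (t.realize (Sum.elim aa' bb')) (t.realize (Sum.elim aa bb')) := by
      refine realize_mono (comm1_compatible hR) t _ _ fun i => ?_
      cases i with
      | inl i => exact hconv _ _ (ha i)
      | inr j => exact comm1_refl hR _
    have h2 : comm1 L R R (t.realize (Sum.elim aa bb)) (t.realize (Sum.elim aa' bb)) := by
      refine realize_mono (comm1_compatible hR) t _ _ fun i => ?_
      cases i with
      | inl i => exact hsub _ _ (ha i)
      | inr j => exact comm1_refl hR _
    have e : t.realize (Sum.elim aa bb') = t.realize (Sum.elim aa bb) := hy.symm.trans hx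
    rw [hw, hz]
    rw [e] at h1
    exact h1.trans h2
  induction h with
  | single h1 => exact gen h1
  | tail _ h2 ih => exact (gen h2).trans ih

/-- `Cg R` is a congruence. -/
lemma cg_congruence (R : A → A → Prop) : IsCongruence L (Cg L R) := by
  refine ⟨⟨fun a θ hθ _ => hθ.1.refl a,
    fun h θ hθ hs => hθ.1.symm (h θ hθ hs),
    fun h1 h2 θ hθ hs => hθ.1.trans (h1 θ hθ hs) (h2 θ hθ hs)⟩, ?_⟩
  intro n f a b h θ hθ hs
  exact hθ.2 n f a b fun i => h i θ hθ hs

theorem stmt17 :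
    (∀ R : A → A → Prop, Reflexive R → Compatible L R →
        (∀ a b, R a b → comm1 L R R a b) ∧ (∀ a b, rconv R a b → comm1 L R R a b)) ↔
    (∀ R : A → A → Prop, Reflexive R → Compatible L R →
        ∀ a b, Cg L R a b ↔ comm1 L R R a b) := by
  constructor
  · intro H R hrefl hcomp a b
    obtain ⟨h1, h2⟩ := H R hrefl hcomp
    constructor
    · intro hcg
      refine hcg (comm1 L R R) ⟨⟨fun c => comm1_refl hrefl c,
        fun h => comm1_symm hrefl h1 (fun a b hba => h2 a b hba) h,
        fun h h' => h.trans h'⟩, comm1_compatible hrefl⟩ h1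
    · exact fun h => comm1_le_cg h
  · intro H R hrefl hcomp
    have hc := H R hrefl hcomp
    constructor
    · intro a b hab
      exact (hc a b).1 fun θ _ hs => hs _ _ hab
    · intro a b hab
      exact (hc a b).1 fun θ hθ hs => hθ.1.symm (hs _ _ hab)
end

section
/- Let A be an algebra and R₁, R₂, S, V reflexive compatible binary relations on A. Then K(R₁∘R₂, S; V) ⊆ K(R₂, S; K(R₁, S; V)), where K(R,S;V) = {(z,w) : there exist x,y with (x,y;z,w) ∈ M(R,S) and x V y}. -/
open FirstOrder Language

universe u

variable {L : Language} {A : Type u} [L.Structure A]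

theorem stmt19 (R₁ R₂ S V : A → A → Prop)
    (hR₁refl : Reflexive R₁) (hR₂refl : Reflexive R₂)
    (hSrefl : Reflexive S) (hVrefl : Reflexive V)
    (hR₁c : Compatible L R₁) (hR₂c : Compatible L R₂)
    (hSc : Compatible L S) (hVc : Compatible L V) :
    ∀ z w, Kop L (rcomp R₁ R₂) S V z w →
      Kop L R₂ S (Kop L R₁ S V) z w := by
  rintro z w ⟨x, y, ⟨n, m, t, a, a', b, b', ha, hb, hx, hy, hz, hw⟩, hV⟩
  choose c hc1 hc2 using ha
  exact ⟨t.realize (Sum.elim c b), t.realize (Sum.elim c b'),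
    ⟨n, m, t, c, a', b, b', hc2, hb, rfl, rfl, hz, hw⟩,
    x, y, ⟨n, m, t, a, c, b, b', hc1, hb, hx, hy, rfl, rfl⟩, hV⟩
end
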